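/- The invariant algebra ℂ[x,y,X,Y]^W is generated as a ℂ-algebra by the d+4 elements q, Q, eu₀, a_0, a_1, …, a_d. -/

import Mathlib

open MvPolynomial

/-- The algebra endomorphism `x ↦ η·y, y ↦ ζ·x, X ↦ ζ·Y, Y ↦ η·X` of `ℂ[x,y,X,Y]`,
with variables `x = X 0`, `y = X 1`, `X = X 2`, `Y = X 3`. -/
noncomputable def sig (ζ η : ℂ) : MvPolynomial (Fin 4) ℂ →ₐ[ℂ] MvPolynomial (Fin 4) ℂ :=
  MvPolynomial.aeval ![C η * X 1, C ζ * X 0, C ζ * X 3, C η * X 2]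

lemma sig_comp (ζ η : ℂ) (h : ζ * η = 1) : (sig ζ η).comp (sig ζ η) = AlgHom.id ℂ _ := by
  apply MvPolynomial.algHom_ext
  intro j
  fin_cases j <;> simp [sig, ← mul_assoc, ← C_mul, h, mul_comm η ζ]

/-- The automorphism `σ_i` (given by `ζ' = ζ^i`, `η = ζ^{-i}`). -/
noncomputable def sigEquiv (ζ η : ℂ) (h : ζ * η = 1) :
    MvPolynomial (Fin 4) ℂ ≃ₐ[ℂ] MvPolynomial (Fin 4) ℂ :=
  AlgEquiv.ofAlgHom (sig ζ η) (sig ζ η) (sig_comp ζ η h) (sig_comp ζ η h)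

/-- The dihedral group `W` of order `2d`, generated by `σ₀` and `σ₁`, as a group of
algebra automorphisms of `ℂ[x,y,X,Y]`. -/
noncomputable def Wgroup (ζ : ℂ) (hζ : ζ ≠ 0) :
    Subgroup (MvPolynomial (Fin 4) ℂ ≃ₐ[ℂ] MvPolynomial (Fin 4) ℂ) :=
  Subgroup.closure {sigEquiv 1 1 (by ring), sigEquiv ζ ζ⁻¹ (mul_inv_cancel₀ hζ)}

/-- The invariant algebra `ℂ[x,y,X,Y]^W`. -/
noncomputable def fixedSubalgebra
    (G : Subgroup (MvPolynomial (Fin 4) ℂ ≃ₐ[ℂ] MvPolynomial (Fin 4) ℂ)) :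
    Subalgebra ℂ (MvPolynomial (Fin 4) ℂ) where
  carrier := {f | ∀ g ∈ G, g f = f}
  mul_mem' := fun hf hg g hgG => by rw [map_mul, hf g hgG, hg g hgG]
  add_mem' := fun hf hg g hgG => by rw [map_add, hf g hgG, hg g hgG]
  algebraMap_mem' := fun r g _ => g.commutes r

/-- `q = x·y`. -/
noncomputable def qP : MvPolynomial (Fin 4) ℂ := X 0 * X 1
/-- `Q = X·Y`. -/
noncomputable def QP : MvPolynomial (Fin 4) ℂ := X 2 * X 3
/-- `eu₀ = x·X + y·Y`. -/
noncomputable def euP : MvPolynomial (Fin 4) ℂ := X 0 * X 2 + X 1 * X 3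
/-- `a_j = x^{d−j}·Y^j + y^{d−j}·X^j`. -/
noncomputable def aP (d j : ℕ) : MvPolynomial (Fin 4) ℂ :=
  X 0 ^ (d - j) * X 3 ^ j + X 1 ^ (d - j) * X 2 ^ j

namespace Stmt1Proof

noncomputable def mono (a b c e : ℕ) : MvPolynomial (Fin 4) ℂ :=
  X 0 ^ a * X 1 ^ b * X 2 ^ c * X 3 ^ e

noncomputable def sP (a b c e : ℕ) : MvPolynomial (Fin 4) ℂ := mono a b c e + mono b a e c

noncomputable def genA (d : ℕ) : Subalgebra ℂ (MvPolynomial (Fin 4) ℂ) :=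
  Algebra.adjoin ℂ ({qP, QP, euP} ∪ Set.range (fun j : Fin (d + 1) => aP d j))

variable {d : ℕ}

lemma qP_mem : qP ∈ genA d := Algebra.subset_adjoin (Set.mem_union_left _ (by simp))
lemma QP_mem : QP ∈ genA d := Algebra.subset_adjoin (Set.mem_union_left _ (by simp))
lemma euP_mem : euP ∈ genA d := Algebra.subset_adjoin (Set.mem_union_left _ (by simp))
lemma aP_mem (j : ℕ) (hj : j ≤ d) : aP d j ∈ genA d :=
  Algebra.subset_adjoin (Set.mem_union_right _ ⟨⟨j, by omega⟩, rfl⟩)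

lemma id_q (a b c e : ℕ) : sP (a+1) (b+1) c e = qP * sP a b c e := by
  simp only [sP, mono, qP]; ring

lemma id_Q (a b c e : ℕ) : sP a b (c+1) (e+1) = QP * sP a b c e := by
  simp only [sP, mono, QP]; ring

lemma id_sym (a b c e : ℕ) : sP a b c e = sP b a e c := by
  simp only [sP, mono]; ring

lemma id_eu (a c : ℕ) : euP * sP a 0 c 0 = sP (a+1) 0 (c+1) 0 + sP a 1 c 1 := by
  simp only [sP, mono, euP]; ring

lemma id_a0 (a e : ℕ) : aP d 0 * sP a 0 0 e = sP (a+d) 0 0 e + sP a d 0 e := by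
  simp only [sP, mono, aP, Nat.sub_zero, pow_zero, pow_add]; ring

lemma id_ad (a e : ℕ) : aP d d * sP a 0 0 e = sP a 0 0 (e+d) + sP a 0 d e := by
  simp only [sP, mono, aP, Nat.sub_self, pow_zero, pow_add]; ring

lemma id_adC (c : ℕ) : aP d d * sP 0 0 c 0 = sP 0 0 (c+d) 0 + sP 0 0 c d := by
  simp only [sP, mono, aP, Nat.sub_self, pow_zero, pow_add]; ring

lemma id_a0ad : aP d 0 * aP d d = sP d 0 d 0 + sP d 0 0 d := by
  simp only [sP, mono, aP, Nat.sub_self, Nat.sub_zero, pow_zero]; ring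

lemma aP_eq (e : ℕ) : aP d e = sP (d - e) 0 0 e := by
  simp only [sP, mono, aP, pow_zero]; ring

lemma euP_eq : euP = sP 1 0 1 0 := by simp only [sP, mono, euP, pow_zero, pow_one]; ring

lemma sP_zero : sP 0 0 0 0 = 1 + 1 := by simp [sP, mono]


lemma two_mem : (sP 0 0 0 0) ∈ genA d := by
  rw [sP_zero]; exact add_mem (one_mem _) (one_mem _)

lemma hdzero : ((d : ℕ) : ZMod d) = 0 := ZMod.natCast_self d

lemma caseA (hd : 1 ≤ d) (n : ℕ)
    (IH : ∀ a b c e : ℕ, a + b + c + e < n → ((a : ZMod d) + e = b + c) →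
      sP a b c e ∈ genA d)
    (a c : ℕ) (hn : a + c = n) (hcong : (a : ZMod d) = (c : ZMod d)) :
    sP a 0 c 0 ∈ genA d := by
  haveI : NeZero d := ⟨by omega⟩
  rcases Nat.eq_zero_or_pos a with ha | ha
  · subst ha
    -- d ∣ c
    have hdc : d ∣ c := by
      rw [← ZMod.natCast_eq_zero_iff]
      simpa using hcong.symm
    rcases Nat.eq_zero_or_pos c with hc | hc
    · subst hc; exact two_mem
    · have hcd : d ≤ c := Nat.le_of_dvd hc hdc
      rcases eq_or_lt_of_le hcd with hcd' | hcd'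
      · rw [← hcd', show sP 0 0 d 0 = aP d d by
          simp only [sP, mono, aP, Nat.sub_self, pow_zero]; ring]
        exact aP_mem d le_rfl
      · -- c > d
        obtain ⟨c', rfl⟩ : ∃ c', c = c' + d := ⟨c - d, by omega⟩
        have hc' : 1 ≤ c' := by omega
        have hdc' : d ∣ c' := by
          have := Nat.dvd_sub hdc (dvd_refl d); simpa using this
        have h1 : sP 0 0 c' 0 ∈ genA d :=
          IH 0 0 c' 0 (by omega) (by
            have : ((c' : ℕ) : ZMod d) = 0 := by
              rw [ZMod.natCast_eq_zero_iff]; exact hdc'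
            simp [this])
        have h2 : sP 0 0 c' d ∈ genA d := by
          obtain ⟨c'', rfl⟩ : ∃ c'', c' = c'' + 1 := ⟨c' - 1, by omega⟩
          obtain ⟨d', hd'⟩ : ∃ d', d = d' + 1 := ⟨d - 1, by omega⟩
          rw [show sP 0 0 (c'' + 1) d = QP * sP 0 0 c'' d' by rw [hd', id_Q]]
          refine mul_mem QP_mem (IH 0 0 c'' d' (by omega) ?_)
          have hcc : (((c'' : ℕ) : ZMod d) + 1) = 0 := by
            have : (((c'' + 1 : ℕ)) : ZMod d) = 0 := by
              rw [ZMod.natCast_eq_zero_iff]; exact hdc'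
            push_cast at this; exact this
          have hdd : (((d' : ℕ) : ZMod d) + 1) = 0 := by
            rw [← Nat.cast_one, ← Nat.cast_add, ← hd']; exact ZMod.natCast_self d
          push_cast
          linear_combination hdd - hcc
        have := id_adC (d := d) c'
        have hmem : aP d d * sP 0 0 c' 0 ∈ genA d := mul_mem (aP_mem d le_rfl) h1
        rw [this] at hmem
        have : sP 0 0 (c' + d) 0 = aP d d * sP 0 0 c' 0 - sP 0 0 c' d := by
          rw [id_adC]; ring
        rw [this]
        exact sub_mem (mul_mem (aP_mem d le_rfl) h1) h2
  · rcases Nat.eq_zero_or_pos c with hc | hc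
    · subst hc
      -- d ∣ a
      have hda : d ∣ a := by
        rw [← ZMod.natCast_eq_zero_iff]
        simpa using hcong
      have had : d ≤ a := Nat.le_of_dvd ha hda
      rcases eq_or_lt_of_le had with had' | had'
      · rw [← had', show sP d 0 0 0 = aP d 0 by
          simp only [sP, mono, aP, Nat.sub_zero, pow_zero]; ring]
        exact aP_mem 0 (by omega)
      · obtain ⟨a', rfl⟩ : ∃ a', a = a' + d := ⟨a - d, by omega⟩
        have ha' : 1 ≤ a' := by omega
        have hda' : d ∣ a' := by
          have := Nat.dvd_sub hda (dvd_refl d); simpa using this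
        have h1 : sP a' 0 0 0 ∈ genA d :=
          IH a' 0 0 0 (by omega) (by
            have : ((a' : ℕ) : ZMod d) = 0 := by
              rw [ZMod.natCast_eq_zero_iff]; exact hda'
            simp [this])
        have h2 : sP a' d 0 0 ∈ genA d := by
          obtain ⟨a'', rfl⟩ : ∃ a'', a' = a'' + 1 := ⟨a' - 1, by omega⟩
          obtain ⟨d', hd'⟩ : ∃ d', d = d' + 1 := ⟨d - 1, by omega⟩
          rw [show sP (a'' + 1) d 0 0 = qP * sP a'' d' 0 0 by rw [hd', id_q]]
          refine mul_mem qP_mem (IH a'' d' 0 0 (by omega) ?_)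
          have hcc : (((a'' : ℕ) : ZMod d) + 1) = 0 := by
            have : (((a'' + 1 : ℕ)) : ZMod d) = 0 := by
              rw [ZMod.natCast_eq_zero_iff]; exact hda'
            push_cast at this; exact this
          have hdd : (((d' : ℕ) : ZMod d) + 1) = 0 := by
            rw [← Nat.cast_one, ← Nat.cast_add, ← hd']; exact ZMod.natCast_self d
          push_cast
          linear_combination hcc - hdd
        have : sP (a' + d) 0 0 0 = aP d 0 * sP a' 0 0 0 - sP a' d 0 0 := by
          rw [id_a0]; ring
        rw [this]
        exact sub_mem (mul_mem (aP_mem 0 (by omega)) h1) h2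
    · -- a ≥ 1, c ≥ 1
      obtain ⟨a', rfl⟩ : ∃ a', a = a' + 1 := ⟨a - 1, by omega⟩
      obtain ⟨c', rfl⟩ : ∃ c', c = c' + 1 := ⟨c - 1, by omega⟩
      rcases Nat.eq_zero_or_pos (a' + c') with h0 | h0
      · have ha0 : a' = 0 := by omega
        have hc0 : c' = 0 := by omega
        subst ha0; subst hc0
        rw [← euP_eq]; exact euP_mem
      · have h1 : sP a' 0 c' 0 ∈ genA d :=
          IH a' 0 c' 0 (by omega) (by
            push_cast at hcong ⊢
            linear_combination hcong)
        have h2 : sP a' 1 c' 1 ∈ genA d := by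
          rcases Nat.eq_zero_or_pos a' with ha0 | ha0
          · subst ha0
            have hc1 : 1 ≤ c' := by omega
            obtain ⟨c'', rfl⟩ : ∃ c'', c' = c'' + 1 := ⟨c' - 1, by omega⟩
            rw [show (1:ℕ) = 0 + 1 from rfl, id_Q]
            refine mul_mem QP_mem (IH 0 1 c'' 0 (by omega) ?_)
            push_cast at hcong ⊢
            linear_combination hcong
          · obtain ⟨a'', rfl⟩ : ∃ a'', a' = a'' + 1 := ⟨a' - 1, by omega⟩
            rw [show (1:ℕ) = 0 + 1 from rfl, id_q]
            refine mul_mem qP_mem (IH a'' 0 c' 1 (by omega) ?_)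
            push_cast at hcong ⊢
            linear_combination hcong
        have : sP (a' + 1) 0 (c' + 1) 0 = euP * sP a' 0 c' 0 - sP a' 1 c' 1 := by
          rw [id_eu]; ring
        rw [this]
        exact sub_mem (mul_mem euP_mem h1) h2



lemma caseB (hd : 1 ≤ d) (n : ℕ)
    (IH : ∀ a b c e : ℕ, a + b + c + e < n → ((a : ZMod d) + e = b + c) →
      sP a b c e ∈ genA d)
    (a e : ℕ) (hn : a + e = n) (hcong : (a : ZMod d) + (e : ZMod d) = 0) :
    sP a 0 0 e ∈ genA d := by
  haveI : NeZero d := ⟨by omega⟩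
  have hdv : d ∣ a + e := by
    rw [← ZMod.natCast_eq_zero_iff]; push_cast; exact hcong
  rcases Nat.eq_zero_or_pos (a + e) with h0 | h0
  · have ha : a = 0 := by omega
    have he : e = 0 := by omega
    subst ha; subst he; exact two_mem
  · have hge : d ≤ a + e := Nat.le_of_dvd h0 hdv
    rcases eq_or_lt_of_le hge with heq | hlt
    · -- a + e = d, so sP a 0 0 e = aP d e
      have hae : a = d - e := by omega
      rw [hae, ← aP_eq]
      exact aP_mem e (by omega)
    · -- a + e > d
      by_cases had : d < a
      · obtain ⟨a', rfl⟩ : ∃ a', a = a' + d := ⟨a - d, by omega⟩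
        have ha' : 1 ≤ a' := by omega
        have h1 : sP a' 0 0 e ∈ genA d :=
          IH a' 0 0 e (by omega) (by
            push_cast at hcong ⊢
            have hdz : ((d : ℕ) : ZMod d) = 0 := ZMod.natCast_self d
            linear_combination hcong - hdz)
        have h2 : sP a' d 0 e ∈ genA d := by
          obtain ⟨a'', rfl⟩ : ∃ a'', a' = a'' + 1 := ⟨a' - 1, by omega⟩
          obtain ⟨d', hd'⟩ : ∃ d', d = d' + 1 := ⟨d - 1, by omega⟩
          rw [show sP (a'' + 1) d 0 e = qP * sP a'' d' 0 e by rw [hd', id_q]]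
          refine mul_mem qP_mem (IH a'' d' 0 e (by omega) ?_)
          have hdd : (((d' : ℕ) : ZMod d) + 1) = 0 := by
            rw [← Nat.cast_one, ← Nat.cast_add, ← hd']; exact ZMod.natCast_self d
          have hdz : ((d : ℕ) : ZMod d) = 0 := ZMod.natCast_self d
          push_cast at hcong ⊢
          linear_combination hcong - hdz - hdd
        have : sP (a' + d) 0 0 e = aP d 0 * sP a' 0 0 e - sP a' d 0 e := by
          rw [id_a0]; ring
        rw [this]
        exact sub_mem (mul_mem (aP_mem 0 (by omega)) h1) h2
      · by_cases hed : d < e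
        · obtain ⟨e', rfl⟩ : ∃ e', e = e' + d := ⟨e - d, by omega⟩
          have he' : 1 ≤ e' := by omega
          have h1 : sP a 0 0 e' ∈ genA d :=
            IH a 0 0 e' (by omega) (by
              push_cast at hcong ⊢
              have hdz : ((d : ℕ) : ZMod d) = 0 := ZMod.natCast_self d
              linear_combination hcong - hdz)
          have h2 : sP a 0 d e' ∈ genA d := by
            obtain ⟨e'', rfl⟩ : ∃ e'', e' = e'' + 1 := ⟨e' - 1, by omega⟩
            obtain ⟨d', hd'⟩ : ∃ d', d = d' + 1 := ⟨d - 1, by omega⟩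
            rw [show sP a 0 d (e'' + 1) = QP * sP a 0 d' e'' by rw [hd', id_Q]]
            refine mul_mem QP_mem (IH a 0 d' e'' (by omega) ?_)
            have hdd : (((d' : ℕ) : ZMod d) + 1) = 0 := by
              rw [← Nat.cast_one, ← Nat.cast_add, ← hd']; exact ZMod.natCast_self d
            have hdz : ((d : ℕ) : ZMod d) = 0 := ZMod.natCast_self d
            push_cast at hcong ⊢
            linear_combination hcong - hdz - hdd
          have : sP a 0 0 (e' + d) = aP d d * sP a 0 0 e' - sP a 0 d e' := by
            rw [id_ad]; ring
          rw [this]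
          exact sub_mem (mul_mem (aP_mem d le_rfl) h1) h2
        · -- a ≤ d, e ≤ d, a + e > d, d ∣ a + e ⟹ a = e = d
          have h2d : 2 * d ≤ a + e := by
            rcases hdv with ⟨k, hk⟩
            rcases k with _ | _ | k
            · omega
            · omega
            · have h2 : d * 2 ≤ d * (k + 1 + 1) := Nat.mul_le_mul_left d (by omega)
              omega
          have ha : a = d := by omega
          have he2 : e = d := by omega
          rw [ha, he2]
          have hA : sP d 0 d 0 ∈ genA d :=
            caseA hd n IH d d (by omega) rfl
          have : sP d 0 0 d = aP d 0 * aP d d - sP d 0 d 0 := by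
            rw [id_a0ad]; ring
          rw [this]
          exact sub_mem (mul_mem (aP_mem 0 (by omega)) (aP_mem d le_rfl)) hA

lemma key (hd : 1 ≤ d) :
    ∀ n a b c e : ℕ, a + b + c + e = n → ((a : ZMod d) + e = b + c) →
      sP a b c e ∈ genA d := by
  intro n
  induction n using Nat.strong_induction_on with
  | _ n IH =>
    have IH' : ∀ a b c e : ℕ, a + b + c + e < n → ((a : ZMod d) + e = b + c) →
        sP a b c e ∈ genA d := fun a b c e h hc => IH _ h a b c e rfl hc
    intro a b c e hn hcong
    by_cases hab : 1 ≤ a ∧ 1 ≤ b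
    · obtain ⟨a', rfl⟩ : ∃ a', a = a' + 1 := ⟨a - 1, by omega⟩
      obtain ⟨b', rfl⟩ : ∃ b', b = b' + 1 := ⟨b - 1, by omega⟩
      rw [id_q]
      refine mul_mem qP_mem (IH' a' b' c e (by omega) ?_)
      push_cast at hcong ⊢
      linear_combination hcong
    · by_cases hce : 1 ≤ c ∧ 1 ≤ e
      · obtain ⟨c', rfl⟩ : ∃ c', c = c' + 1 := ⟨c - 1, by omega⟩
        obtain ⟨e', rfl⟩ : ∃ e', e = e' + 1 := ⟨e - 1, by omega⟩
        rw [id_Q]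
        refine mul_mem QP_mem (IH' a b c' e' (by omega) ?_)
        push_cast at hcong ⊢
        linear_combination hcong
      · rcases Nat.eq_zero_or_pos b with hb | hb
        · subst hb
          rcases Nat.eq_zero_or_pos e with he | he
          · subst he
            exact caseA hd n IH' a c (by omega) (by
              push_cast at hcong ⊢; linear_combination hcong)
          · have hc0 : c = 0 := by omega
            subst hc0
            exact caseB hd n IH' a e (by omega) (by
              push_cast at hcong ⊢; linear_combination hcong)
        · have ha0 : a = 0 := by omega
          subst ha0
          rcases Nat.eq_zero_or_pos e with he | he
          · subst he
            rw [id_sym]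
            exact caseB hd n IH' b c (by omega) (by
              push_cast at hcong ⊢; linear_combination -hcong)
          · have hc0 : c = 0 := by omega
            subst hc0
            rw [id_sym]
            exact caseA hd n IH' b e (by omega) (by
              push_cast at hcong ⊢; linear_combination -hcong)



def perm4 : Equiv.Perm (Fin 4) := ⟨![1, 0, 3, 2], ![1, 0, 3, 2], by decide, by decide⟩

noncomputable def piF (u : Fin 4 →₀ ℕ) : Fin 4 →₀ ℕ := Finsupp.equivMapDomain perm4 u

@[simp] lemma piF_0 (u : Fin 4 →₀ ℕ) : piF u 0 = u 1 := rfl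
@[simp] lemma piF_1 (u : Fin 4 →₀ ℕ) : piF u 1 = u 0 := rfl
@[simp] lemma piF_2 (u : Fin 4 →₀ ℕ) : piF u 2 = u 3 := rfl
@[simp] lemma piF_3 (u : Fin 4 →₀ ℕ) : piF u 3 = u 2 := rfl

lemma piF_injective : Function.Injective piF := by
  have : piF = ⇑(Finsupp.equivCongrLeft (M := ℕ) perm4) := by
    funext u; rw [Finsupp.equivCongrLeft_apply]; rfl
  rw [this]
  exact (Finsupp.equivCongrLeft perm4).injective

lemma monomial_eq_mono (u : Fin 4 →₀ ℕ) (c : ℂ) :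
    monomial u c = C c * mono (u 0) (u 1) (u 2) (u 3) := by
  rw [monomial_eq]
  congr 1
  rw [Finsupp.prod_pow]
  rw [Fin.prod_univ_four]
  rfl

lemma sig_monomial (ζ η : ℂ) (u : Fin 4 →₀ ℕ) (c : ℂ) :
    sig ζ η (monomial u c)
      = monomial (piF u) (η ^ (u 0 + u 3) * ζ ^ (u 1 + u 2) * c) := by
  rw [monomial_eq_mono, monomial_eq_mono, piF_0, piF_1, piF_2, piF_3]
  rw [map_mul]
  have hC : sig ζ η (C c) = C c := by
    simp [sig]
  rw [hC]
  simp only [sig, mono, map_mul, map_pow, aeval_X]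
  simp only [Matrix.cons_val_zero, Matrix.cons_val_one, Matrix.head_cons,
    Matrix.cons_val_two, Matrix.tail_cons, Matrix.cons_val_three, Matrix.head_fin_const,
    Matrix.cons_val_fin_one, Fin.isValue]
  simp only [C_mul, C_pow, pow_add]
  ring

lemma coeff_sig (ζ η : ℂ) (f : MvPolynomial (Fin 4) ℂ) (u : Fin 4 →₀ ℕ) :
    coeff (piF u) (sig ζ η f) = η ^ (u 0 + u 3) * ζ ^ (u 1 + u 2) * coeff u f := by
  induction f using MvPolynomial.induction_on' with
  | monomial v c =>
      rw [sig_monomial, coeff_monomial, coeff_monomial]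
      by_cases h : v = u
      · subst h
        simp
      · rw [if_neg (fun hh => h (piF_injective hh)), if_neg h, mul_zero]
  | add p q hp hq =>
      rw [map_add, coeff_add, coeff_add, hp, hq, mul_add]

lemma sigEquiv_apply (ζ η : ℂ) (h : ζ * η = 1) (f : MvPolynomial (Fin 4) ℂ) :
    sigEquiv ζ η h f = sig ζ η f := rfl

lemma sig_fix_qP (ζ η : ℂ) (h : ζ * η = 1) : sig ζ η qP = qP := by
  simp only [sig, qP, map_mul, aeval_X, Matrix.cons_val_zero, Matrix.cons_val_one,
    Matrix.head_cons]
  rw [show (C η * X 1) * (C ζ * X 0) = C (ζ * η) * (X 0 * X 1 : MvPolynomial (Fin 4) ℂ) by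
    rw [C_mul]; ring, h, C_1, one_mul]

lemma sig_fix_QP (ζ η : ℂ) (h : ζ * η = 1) : sig ζ η QP = QP := by
  simp only [sig, QP, map_mul, aeval_X]
  simp only [Matrix.cons_val_two, Matrix.tail_cons, Matrix.cons_val_three, Matrix.head_cons,
    Matrix.cons_val_zero, Matrix.cons_val_one, Fin.isValue]
  rw [show (C ζ * X 3) * (C η * X 2) = C (ζ * η) * (X 2 * X 3 : MvPolynomial (Fin 4) ℂ) by
    rw [C_mul]; ring, h, C_1, one_mul]

lemma sig_fix_euP (ζ η : ℂ) (h : ζ * η = 1) : sig ζ η euP = euP := by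
  simp only [sig, euP, map_add, map_mul, aeval_X]
  simp only [Matrix.cons_val_zero, Matrix.cons_val_one, Matrix.head_cons,
    Matrix.cons_val_two, Matrix.tail_cons, Matrix.cons_val_three, Fin.isValue]
  have h1 : (C η * X 1) * (C ζ * X 3) = C (ζ * η) * (X 1 * X 3 : MvPolynomial (Fin 4) ℂ) := by
    rw [C_mul]; ring
  have h2 : (C ζ * X 0) * (C η * X 2) = C (ζ * η) * (X 0 * X 2 : MvPolynomial (Fin 4) ℂ) := by
    rw [C_mul]; ring
  rw [h1, h2, h, C_1, one_mul, one_mul]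
  ring

lemma sig_fix_aP {d : ℕ} (ζ η : ℂ) (hζd : ζ ^ d = 1) (hηd : η ^ d = 1)
    (j : ℕ) (hj : j ≤ d) : sig ζ η (aP d j) = aP d j := by
  simp only [sig, aP, map_add, map_mul, map_pow, aeval_X]
  simp only [Matrix.cons_val_zero, Matrix.cons_val_one, Matrix.head_cons,
    Matrix.cons_val_two, Matrix.tail_cons, Matrix.cons_val_three, Fin.isValue]
  have h1 : (C η : MvPolynomial (Fin 4) ℂ) ^ (d - j) * (C η) ^ j = 1 := by
    rw [← pow_add, Nat.sub_add_cancel hj, ← C_pow, hηd, C_1]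
  have h2 : (C ζ : MvPolynomial (Fin 4) ℂ) ^ (d - j) * (C ζ) ^ j = 1 := by
    rw [← pow_add, Nat.sub_add_cancel hj, ← C_pow, hζd, C_1]
  linear_combination (X 1 ^ (d - j) * X 2 ^ j : MvPolynomial (Fin 4) ℂ) * h1 +
    (X 0 ^ (d - j) * X 3 ^ j : MvPolynomial (Fin 4) ℂ) * h2

lemma fixed_of_generators {p : MvPolynomial (Fin 4) ℂ}
    {S : Set (MvPolynomial (Fin 4) ℂ ≃ₐ[ℂ] MvPolynomial (Fin 4) ℂ)}
    (hp : ∀ s ∈ S, s p = p) : ∀ g ∈ Subgroup.closure S, g p = p := by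
  intro g hg
  induction hg using Subgroup.closure_induction with
  | mem s hs => exact hp s hs
  | one => rfl
  | mul x y hx hy hpx hpy => rw [AlgEquiv.mul_apply, hpy, hpx]
  | inv x hx hpx =>
      show x.symm p = p
      conv_lhs => rw [← hpx]
      exact x.symm_apply_apply p

end Stmt1Proof

/-- the invariant algebra `ℂ[x,y,X,Y]^W` is generated as a `ℂ`-algebra by
`q`, `Q`, `eu₀`, `a_0`, …, `a_d`. -/
theorem stmt1 (d : ℕ) (hd : 1 ≤ d) (ζ : ℂ) (hζ : IsPrimitiveRoot ζ d) :
    Algebra.adjoin ℂ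
        ({qP, QP, euP} ∪ Set.range (fun j : Fin (d + 1) => aP d j)) =
      fixedSubalgebra (Wgroup ζ (hζ.ne_zero (by omega))) := by
  classical
  haveI : NeZero d := ⟨by omega⟩
  have hz : ζ ≠ 0 := hζ.ne_zero (by omega)
  have hζd : ζ ^ d = 1 := hζ.pow_eq_one
  have hζinvd : (ζ⁻¹) ^ d = 1 := by
    rw [inv_pow, hζd, inv_one]
  apply le_antisymm
  · -- adjoin ≤ fixed
    apply Algebra.adjoin_le
    intro p hp
    rcases hp with hp | hp
    · -- p ∈ {qP, QP, euP}
      intro g hg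
      refine Stmt1Proof.fixed_of_generators ?_ g hg
      intro s hs
      rcases hs with hs | hs
      · subst hs
        rw [Stmt1Proof.sigEquiv_apply]
        rcases hp with rfl | hp
        · exact Stmt1Proof.sig_fix_qP 1 1 (by ring)
        rcases hp with rfl | rfl
        · exact Stmt1Proof.sig_fix_QP 1 1 (by ring)
        · exact Stmt1Proof.sig_fix_euP 1 1 (by ring)
      · rw [Set.mem_singleton_iff] at hs
        subst hs
        rw [Stmt1Proof.sigEquiv_apply]
        rcases hp with rfl | hp
        · exact Stmt1Proof.sig_fix_qP ζ ζ⁻¹ (mul_inv_cancel₀ hz)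
        rcases hp with rfl | rfl
        · exact Stmt1Proof.sig_fix_QP ζ ζ⁻¹ (mul_inv_cancel₀ hz)
        · exact Stmt1Proof.sig_fix_euP ζ ζ⁻¹ (mul_inv_cancel₀ hz)
    · obtain ⟨j, rfl⟩ := hp
      intro g hg
      refine Stmt1Proof.fixed_of_generators ?_ g hg
      intro s hs
      have hjd : (j : ℕ) ≤ d := by omega
      rcases hs with hs | hs
      · subst hs
        rw [Stmt1Proof.sigEquiv_apply]
        exact Stmt1Proof.sig_fix_aP 1 1 (one_pow d) (one_pow d) j hjd
      · rw [Set.mem_singleton_iff] at hs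
        subst hs
        rw [Stmt1Proof.sigEquiv_apply]
        exact Stmt1Proof.sig_fix_aP ζ ζ⁻¹ hζd hζinvd j hjd
  · -- fixed ≤ adjoin
    intro f hf
    have hσ0 : sig 1 1 f = f := by
      have := hf (sigEquiv 1 1 (by ring)) (Subgroup.subset_closure (Set.mem_insert _ _))
      exact this
    have hσ1 : sig ζ ζ⁻¹ f = f := by
      have := hf (sigEquiv ζ ζ⁻¹ (mul_inv_cancel₀ hz))
        (Subgroup.subset_closure (Set.mem_insert_of_mem _ rfl))
      exact this
    have hcong : ∀ u ∈ f.support,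
        ((u 0 : ZMod d) + (u 3 : ZMod d) = (u 1 : ZMod d) + (u 2 : ZMod d)) := by
      intro u hu
      have hc0 : coeff u f ≠ 0 := MvPolynomial.mem_support_iff.mp hu
      have h0 : coeff (Stmt1Proof.piF u) f = coeff u f := by
        conv_lhs => rw [← hσ0]
        rw [Stmt1Proof.coeff_sig]
        simp
      have h1 : coeff (Stmt1Proof.piF u) f
          = ζ⁻¹ ^ (u 0 + u 3) * ζ ^ (u 1 + u 2) * coeff u f := by
        conv_lhs => rw [← hσ1]
        rw [Stmt1Proof.coeff_sig]
      have hmul : ζ⁻¹ ^ (u 0 + u 3) * ζ ^ (u 1 + u 2) = 1 := by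
        have h2 : ζ⁻¹ ^ (u 0 + u 3) * ζ ^ (u 1 + u 2) * coeff u f = 1 * coeff u f := by
          rw [← h1, h0, one_mul]
        exact mul_right_cancel₀ hc0 h2
      have hpow : ζ ^ (u 0 + u 3) = ζ ^ (u 1 + u 2) := by
        rw [inv_pow, inv_mul_eq_one₀ (pow_ne_zero _ hz)] at hmul
        exact hmul
      have hself : ∀ m : ℕ, ζ ^ (m % d) = ζ ^ m := by
        intro m
        conv_rhs => rw [← Nat.mod_add_div m d]
        rw [pow_add, pow_mul, hζd, one_pow, mul_one]
      have hmod : (u 0 + u 3) ≡ (u 1 + u 2) [MOD d] :=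
        hζ.pow_inj (Nat.mod_lt _ (by omega)) (Nat.mod_lt _ (by omega))
          (by rw [hself, hself]; exact hpow)
      have := (ZMod.natCast_eq_natCast_iff _ _ _).mpr hmod
      push_cast at this
      exact this
    have hrepr : f = (2⁻¹ : ℂ) • ∑ u ∈ f.support,
        (monomial u (coeff u f) + sig 1 1 (monomial u (coeff u f))) := by
      rw [Finset.sum_add_distrib, support_sum_monomial_coeff, ← map_sum,
        support_sum_monomial_coeff, hσ0, ← two_smul ℂ f, smul_smul]
      norm_num
    rw [hrepr]
    refine Subalgebra.smul_mem _ (Subalgebra.sum_mem _ fun u hu => ?_) _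
    rw [Stmt1Proof.sig_monomial]
    simp only [one_pow, one_mul]
    have hterm : monomial u (coeff u f) + monomial (Stmt1Proof.piF u) (coeff u f)
        = C (coeff u f) * Stmt1Proof.sP (u 0) (u 1) (u 2) (u 3) := by
      rw [Stmt1Proof.monomial_eq_mono, Stmt1Proof.monomial_eq_mono,
        Stmt1Proof.piF_0, Stmt1Proof.piF_1, Stmt1Proof.piF_2, Stmt1Proof.piF_3,
        Stmt1Proof.sP, mul_add]
    rw [hterm]
    refine mul_mem ?_ (Stmt1Proof.key hd _ (u 0) (u 1) (u 2) (u 3) rfl (hcong u hu))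
    rw [← MvPolynomial.algebraMap_eq]
    exact Subalgebra.algebraMap_mem _ _
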